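/- arXiv:2104.11310 — 2 statements merged into one kernel-verified Lean document; each statement's English description precedes it below -/
import Mathlib

section
/- Let Q be a finite connected acyclic quiver, d a dimension vector, V a real representation of Q of dimension vector d, and σ ∈ ℤ^{Q₀} a weight. If V is σ-polystable, then σ lies in the relative (intrinsic) interior of the orbit cone Ω(V). -/
set_option maxHeartbeats 1000000
set_option synthInstance.maxHeartbeats 400000


open scoped BigOperators
open Matrix

namespace QuiverRI

variable {V A : Type}

/-- A real representation, of dimension vector `dv`, of the quiver with vertex set `V`,
arrow set `A`, and each arrow `a : src a → tgt a`: a matrix in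
`ℝ^{dv(tgt a) × dv(src a)}` for every arrow `a`. -/
def Rep (src tgt : A → V) (dv : V → ℕ) : Type :=
  ∀ a : A, Matrix (Fin (dv (tgt a))) (Fin (dv (src a))) ℝ

/-- A subrepresentation of `R`: a family of subspaces `space x ⊆ ℝ^{dv x}` invariant under
all the structure maps of `R`. -/
structure Subrep (src tgt : A → V) (dv : V → ℕ) (R : Rep src tgt dv) where
  space : ∀ x : V, Submodule ℝ (Fin (dv x) → ℝ)
  invariant : ∀ a : A, ∀ v ∈ space (src a), (R a).mulVec v ∈ space (tgt a)

/-- The orbit cone `Ω(V)` of a representation: all real weights `σ` with `σ · dim R = 0`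
and `σ · dim W ≤ 0` for every subrepresentation `W`. -/
def OrbitCone [Fintype V] (src tgt : A → V) (dv : V → ℕ) (R : Rep src tgt dv) :
    Set (V → ℝ) :=
  {σ | (∑ x, σ x * dv x) = 0 ∧
    ∀ W : Subrep src tgt dv R, (∑ x, σ x * Module.finrank ℝ (W.space x)) ≤ 0}

/-- A subrepresentation `W` of `R` is `σ`-stable (as a representation in its own right;
its subrepresentations are exactly the subrepresentations of `R` contained in `W`):
`σ · dim W = 0` and `σ · dim W' < 0` for every subrepresentation `W' ⊆ W` other than
`0` and `W`. -/
def IsStableSub [Fintype V] (src tgt : A → V) (dv : V → ℕ) (R : Rep src tgt dv)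
    (σ : V → ℤ) (W : Subrep src tgt dv R) : Prop :=
  (∑ x, σ x * (Module.finrank ℝ (W.space x) : ℤ)) = 0 ∧
  ∀ W' : Subrep src tgt dv R, (∀ x, W'.space x ≤ W.space x) →
    W'.space ≠ (fun x => (⊥ : Submodule ℝ (Fin (dv x) → ℝ))) → W'.space ≠ W.space →
    (∑ x, σ x * (Module.finrank ℝ (W'.space x) : ℤ)) < 0

/-- `R` is `σ`-polystable: it is the internal direct sum, at every vertex, of finitely many
`σ`-stable subrepresentations. -/
def IsPolystable [Fintype V] (src tgt : A → V) (dv : V → ℕ) (R : Rep src tgt dv)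
    (σ : V → ℤ) : Prop :=
  ∃ (k : ℕ) (W : Fin k → Subrep src tgt dv R),
    (∀ x : V, DirectSum.IsInternal (fun j : Fin k => (W j).space x)) ∧
    ∀ j, IsStableSub src tgt dv R σ (W j)

/-- `R` is locally semi-simple: `σ₀`-polystable for some integral weight `σ₀`. -/
def LocallySemisimple [Fintype V] (src tgt : A → V) (dv : V → ℕ)
    (R : Rep src tgt dv) : Prop :=
  ∃ σ₀ : V → ℤ, IsPolystable src tgt dv R σ₀

/-- `R` is `σ`-critical:
`∑_{a : src a = x} (R a)ᵀ (R a) − ∑_{a : tgt a = x} (R a)(R a)ᵀ = σ(x) I` at each vertex. -/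
def IsCritical [Fintype V] [Fintype A] [DecidableEq V] (src tgt : A → V) (dv : V → ℕ)
    (R : Rep src tgt dv) (σ : V → ℤ) : Prop :=
  ∀ x : V,
    ((∑ a : A, if h : src a = x then
        Matrix.reindex (finCongr (congrArg dv h)) (finCongr (congrArg dv h)) ((R a)ᵀ * R a)
      else 0) -
     (∑ a : A, if h : tgt a = x then
        Matrix.reindex (finCongr (congrArg dv h)) (finCongr (congrArg dv h)) (R a * (R a)ᵀ)
      else 0))
    = (σ x : ℝ) • (1 : Matrix (Fin (dv x)) (Fin (dv x)) ℝ)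

/-- The base-change action of `∏_x GL(dv x)` on representations:
`(A · R)(a) = A(tgt a) · R(a) · A(src a)⁻¹`. -/
noncomputable def act (src tgt : A → V) (dv : V → ℕ)
    (Amat : ∀ x : V, Matrix (Fin (dv x)) (Fin (dv x)) ℝ) (R : Rep src tgt dv) :
    Rep src tgt dv :=
  fun a => Amat (tgt a) * R a * (Amat (src a))⁻¹

/-- The quiver is connected (as an undirected graph). -/
def Connected (src tgt : A → V) : Prop :=
  ∀ x y : V, Relation.ReflTransGen
    (fun u v => ∃ a : A, (src a = u ∧ tgt a = v) ∨ (src a = v ∧ tgt a = u)) x y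

/-- The quiver is acyclic: it admits a strictly monotone grading of its vertices
(equivalently, it has no directed cycles). -/
def Acyclic (src tgt : A → V) : Prop :=
  ∃ r : V → ℕ, ∀ a : A, r (src a) < r (tgt a)

end QuiverRI

namespace QuiverRI

open Module

section Proj

variable {M : Type*} [AddCommGroup M] [Module ℝ M] {k : ℕ} {Sp : Fin k → Submodule ℝ M}

/-- Projection onto the `i`-th summand of an internal direct sum. -/
noncomputable def projIS (h : DirectSum.IsInternal Sp) (i : Fin k) : M →ₗ[ℝ] M where
  toFun v := ((LinearEquiv.ofBijective (DirectSum.coeLinearMap Sp) h).symm v i : M)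
  map_add' a b := by dsimp only; rw [map_add, DirectSum.add_apply, Submodule.coe_add]
  map_smul' c a := by
    dsimp only; rw [_root_.map_smul, DirectSum.smul_apply, Submodule.coe_smul, RingHom.id_apply]

theorem projIS_mem (h : DirectSum.IsInternal Sp) (i : Fin k) (v : M) :
    projIS h i v ∈ Sp i :=
  ((LinearEquiv.ofBijective (DirectSum.coeLinearMap Sp) h).symm v i).2

theorem projIS_eq_self (h : DirectSum.IsInternal Sp) {i : Fin k} {v : M} (hv : v ∈ Sp i) :
    projIS h i v = v := by
  simp only [projIS, LinearMap.coe_mk, AddHom.coe_mk]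
  rw [h.ofBijective_coeLinearMap_of_mem hv]

theorem projIS_eq_zero (h : DirectSum.IsInternal Sp) {i j : Fin k} (hij : i ≠ j) {v : M}
    (hv : v ∈ Sp i) : projIS h j v = 0 := by
  simp only [projIS, LinearMap.coe_mk, AddHom.coe_mk]
  rw [h.ofBijective_coeLinearMap_of_mem_ne hij hv, Submodule.coe_zero]

/-- Partial sums of the family of submodules. -/
def TN (Sp : Fin k → Submodule ℝ M) (m : ℕ) : Submodule ℝ M :=
  ⨆ j : Fin k, if (j : ℕ) < m then Sp j else ⊥

theorem TN_zero : TN Sp 0 = ⊥ := by simp [TN]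

theorem TN_top (h : DirectSum.IsInternal Sp) : TN Sp k = ⊤ := by
  have : ∀ j : Fin k, (if (j : ℕ) < k then Sp j else ⊥) = Sp j := fun j => if_pos j.2
  rw [TN]
  simp_rw [this]
  exact h.submodule_iSup_eq_top

theorem TN_mono {m n : ℕ} (hmn : m ≤ n) : TN Sp m ≤ TN Sp n :=
  iSup_mono fun j => by
    by_cases hj : (j : ℕ) < m
    · rw [if_pos hj, if_pos (hj.trans_le hmn)]
    · rw [if_neg hj]; exact bot_le

theorem Sp_le_TN {i : Fin k} {m : ℕ} (him : (i : ℕ) < m) : Sp i ≤ TN Sp m :=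
  le_iSup_of_le i (by rw [if_pos him])

theorem TN_le_ker (h : DirectSum.IsInternal Sp) (i : Fin k) {m : ℕ} (hm : m ≤ (i : ℕ)) :
    TN Sp m ≤ LinearMap.ker (projIS h i) :=
  iSup_le fun j => by
    by_cases hj : (j : ℕ) < m
    · rw [if_pos hj]
      intro v hv
      exact LinearMap.mem_ker.2
        (projIS_eq_zero h (Fin.ne_of_val_ne (by omega)) hv)
    · rw [if_neg hj]; exact bot_le

theorem sub_projIS_mem (h : DirectSum.IsInternal Sp) (i : Fin k) {v : M}
    (hv : v ∈ TN Sp ((i : ℕ) + 1)) : v - projIS h i v ∈ TN Sp i := by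
  refine Submodule.iSup_induction (motive := fun v => v - projIS h i v ∈ TN Sp i) _ hv
    (fun j w hw => ?_) (by simp) (fun a b ha hb => ?_)
  · by_cases hj : (j : ℕ) < (i : ℕ) + 1
    · rw [if_pos hj] at hw
      rcases eq_or_ne j i with rfl | hne
      · rw [projIS_eq_self h hw, sub_self]; exact zero_mem _
      · rw [projIS_eq_zero h hne hw, sub_zero]
        exact Sp_le_TN (by omega : (j : ℕ) < (i : ℕ)) hw
    · rw [if_neg hj] at hw
      simp only [Submodule.mem_bot] at hw
      subst hw; simp
  · have : a + b - projIS h i (a + b) = (a - projIS h i a) + (b - projIS h i b) := by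
      rw [map_add]; abel
    show a + b - projIS h i (a + b) ∈ TN Sp i
    rw [this]; exact add_mem ha hb

variable {N : Type*} [AddCommGroup N] [Module ℝ N] {Sq : Fin k → Submodule ℝ N}

theorem projIS_comm (h : DirectSum.IsInternal Sp) (h' : DirectSum.IsInternal Sq)
    (f : M →ₗ[ℝ] N) (hf : ∀ j : Fin k, ∀ v ∈ Sp j, f v ∈ Sq j) (i : Fin k) (v : M) :
    projIS h' i (f v) = f (projIS h i v) := by
  have hv : v ∈ ⨆ j, Sp j := by rw [h.submodule_iSup_eq_top]; trivial
  refine Submodule.iSup_induction (motive := fun v => projIS h' i (f v) = f (projIS h i v)) _ hv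
    (fun j w hw => ?_) (by simp) (fun a b ha hb => by show projIS h' i (f (a+b)) = _; simp only [map_add, ha, hb])
  rcases eq_or_ne j i with rfl | hne
  · rw [projIS_eq_self h hw, projIS_eq_self h' (hf j w hw)]
  · rw [projIS_eq_zero h hne hw, projIS_eq_zero h' hne (hf j w hw), map_zero]

theorem map_TN_mem (f : M →ₗ[ℝ] N) (hf : ∀ j : Fin k, ∀ v ∈ Sp j, f v ∈ Sq j) (m : ℕ)
    {v : M} (hv : v ∈ TN Sp m) : f v ∈ TN Sq m := by
  refine Submodule.iSup_induction (motive := fun v => f v ∈ TN Sq m) _ hv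
    (fun j w hw => ?_) (by simp) (fun a b ha hb => by show f (a+b) ∈ _; rw [map_add]; exact add_mem ha hb)
  by_cases hj : (j : ℕ) < m
  · rw [if_pos hj] at hw
    exact Sp_le_TN hj (hf j w hw)
  · rw [if_neg hj] at hw
    simp only [Submodule.mem_bot] at hw
    subst hw; simp

end Proj

section Quiver

open Module Finset

variable {V A : Type} [Fintype V] {src tgt : A → V} {dv : V → ℕ} {R : Rep src tgt dv}
  {k : ℕ} {S : Fin k → Subrep src tgt dv R}

/-- The full subrepresentation. -/
def topSubrep (src tgt : A → V) (dv : V → ℕ) (R : Rep src tgt dv) : Subrep src tgt dv R :=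
  ⟨fun _ => ⊤, fun _ _ _ => Submodule.mem_top⟩

/-- The projection of the `i`-th filtration step of `W` to the `i`-th summand. -/
noncomputable def Pspace (hin : ∀ x, DirectSum.IsInternal fun j : Fin k => (S j).space x)
    (W : Subrep src tgt dv R) (i : Fin k) (x : V) : Submodule ℝ (Fin (dv x) → ℝ) :=
  Submodule.map (projIS (hin x) i)
    (W.space x ⊓ TN (fun j => (S j).space x) ((i : ℕ) + 1))

theorem Pspace_invariant (hin : ∀ x, DirectSum.IsInternal fun j : Fin k => (S j).space x)
    (W : Subrep src tgt dv R) (i : Fin k) (a : A) (v : Fin (dv (src a)) → ℝ)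
    (hv : v ∈ Pspace hin W i (src a)) : (R a).mulVec v ∈ Pspace hin W i (tgt a) := by
  obtain ⟨u, hu, rfl⟩ := hv
  have hf : ∀ j : Fin k, ∀ w ∈ (S j).space (src a), (R a).mulVecLin w ∈ (S j).space (tgt a) :=
    fun j w hw => by rw [Matrix.mulVecLin_apply]; exact (S j).invariant a w hw
  have hcomm := projIS_comm (hin (src a)) (hin (tgt a)) (R a).mulVecLin hf i u
  rw [← Matrix.mulVecLin_apply, ← hcomm]
  exact Submodule.mem_map_of_mem
    ⟨by rw [Matrix.mulVecLin_apply]; exact W.invariant a u hu.1, map_TN_mem _ hf _ hu.2⟩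

/-- `Pspace` as a subrepresentation. -/
noncomputable def Psub (hin : ∀ x, DirectSum.IsInternal fun j : Fin k => (S j).space x)
    (W : Subrep src tgt dv R) (i : Fin k) : Subrep src tgt dv R :=
  ⟨Pspace hin W i, Pspace_invariant hin W i⟩

theorem Pspace_le (hin : ∀ x, DirectSum.IsInternal fun j : Fin k => (S j).space x)
    (W : Subrep src tgt dv R) (i : Fin k) (x : V) : Pspace hin W i x ≤ (S i).space x := by
  rintro v ⟨u, hu, rfl⟩; exact projIS_mem (hin x) i u

theorem finrank_step (hin : ∀ x, DirectSum.IsInternal fun j : Fin k => (S j).space x)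
    (W : Subrep src tgt dv R) (i : Fin k) (x : V) :
    finrank ℝ (W.space x ⊓ TN (fun j => (S j).space x) ((i : ℕ) + 1) : Submodule ℝ _)
      = finrank ℝ (W.space x ⊓ TN (fun j => (S j).space x) (i : ℕ) : Submodule ℝ _)
        + finrank ℝ (Pspace hin W i x) := by
  set Sp := fun j : Fin k => (S j).space x with hSp
  set U' := W.space x ⊓ TN Sp ((i : ℕ) + 1) with hU'
  set ψ : U' →ₗ[ℝ] (Fin (dv x) → ℝ) := (projIS (hin x) i).comp U'.subtype with hψ
  have hrange : LinearMap.range ψ = Pspace hin W i x := by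
    rw [hψ, LinearMap.range_comp, Submodule.range_subtype]; rfl
  have hker : LinearMap.ker ψ = Submodule.comap U'.subtype (W.space x ⊓ TN Sp (i : ℕ)) := by
    ext v
    simp only [hψ, LinearMap.mem_ker, Submodule.mem_comap, LinearMap.comp_apply,
      Submodule.subtype_apply, Submodule.mem_inf]
    constructor
    · intro h0
      have h1 := sub_projIS_mem (hin x) i v.2.2
      rw [h0, sub_zero] at h1
      exact ⟨v.2.1, h1⟩
    · intro hmem
      exact TN_le_ker (hin x) i le_rfl hmem.2
  have h1 := LinearMap.finrank_range_add_finrank_ker ψ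
  have h2 : finrank ℝ (LinearMap.ker ψ)
      = finrank ℝ (W.space x ⊓ TN Sp (i : ℕ) : Submodule ℝ _) := by
    rw [hker]
    have hle : W.space x ⊓ TN Sp (i : ℕ) ≤ U' :=
      inf_le_inf_left _ (TN_mono (Nat.le_succ _))
    exact (Submodule.comapSubtypeEquivOfLe hle).finrank_eq
  rw [hrange, h2] at h1
  omega

theorem finrank_filtration (hin : ∀ x, DirectSum.IsInternal fun j : Fin k => (S j).space x)
    (W : Subrep src tgt dv R) (x : V) (m : ℕ) :
    m ≤ k →
    finrank ℝ (W.space x ⊓ TN (fun j => (S j).space x) m : Submodule ℝ _)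
      = ∑ i ∈ Finset.univ.filter (fun i : Fin k => (i : ℕ) < m),
          finrank ℝ (Pspace hin W i x) := by
  induction m with
  | zero =>
    intro _
    have : Finset.univ.filter (fun i : Fin k => (i : ℕ) < 0) = ∅ := by
      ext i; simp
    rw [TN_zero, inf_bot_eq, this, Finset.sum_empty, finrank_bot]
  | succ m ih =>
    intro hm
    have hmk : m < k := hm
    have hrec := ih (le_of_lt hmk)
    have hstep := finrank_step hin W ⟨m, hmk⟩ x
    have hfilter : Finset.univ.filter (fun i : Fin k => (i : ℕ) < m + 1)
        = insert (⟨m, hmk⟩ : Fin k) (Finset.univ.filter (fun i : Fin k => (i : ℕ) < m)) := by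
      ext i
      simp only [Finset.mem_filter, Finset.mem_univ, true_and, Finset.mem_insert, Fin.ext_iff]
      omega
    rw [hstep, hrec, hfilter, Finset.sum_insert (by simp)]
    omega

theorem finrank_W_eq_sum (hin : ∀ x, DirectSum.IsInternal fun j : Fin k => (S j).space x)
    (W : Subrep src tgt dv R) (x : V) :
    finrank ℝ (W.space x) = ∑ i : Fin k, finrank ℝ (Pspace hin W i x) := by
  have h := finrank_filtration hin W x k le_rfl
  rw [TN_top (hin x), inf_top_eq, Finset.filter_true_of_mem (fun i _ => i.2)] at h
  exact h

theorem Pspace_top (hin : ∀ x, DirectSum.IsInternal fun j : Fin k => (S j).space x)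
    (i : Fin k) (x : V) : Pspace hin (topSubrep src tgt dv R) i x = (S i).space x := by
  refine le_antisymm (Pspace_le hin _ i x) fun v hv => ?_
  exact ⟨v, ⟨Submodule.mem_top, Sp_le_TN (Nat.lt_succ_self _) hv⟩, projIS_eq_self (hin x) hv⟩

theorem dv_eq_sum (hin : ∀ x, DirectSum.IsInternal fun j : Fin k => (S j).space x) (x : V) :
    dv x = ∑ i : Fin k, finrank ℝ ((S i).space x) := by
  have h := finrank_W_eq_sum hin (topSubrep src tgt dv R) x
  have h0 : finrank ℝ ((topSubrep src tgt dv R).space x) = dv x := by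
    have ht : (topSubrep src tgt dv R).space x = ⊤ := rfl
    rw [ht, finrank_top, Module.finrank_fin_fun]
  rw [h0] at h
  exact h.trans (Finset.sum_congr rfl fun i _ => by rw [Pspace_top hin])

section Weighted

variable {α : Type} [CommRing α]

theorem sum_dim_eq (hin : ∀ x, DirectSum.IsInternal fun j : Fin k => (S j).space x)
    (W : Subrep src tgt dv R) (c : V → α) :
    ∑ x, c x * (finrank ℝ (W.space x) : α)
      = ∑ i : Fin k, ∑ x, c x * (finrank ℝ (Pspace hin W i x) : α) := by
  rw [Finset.sum_comm]
  refine Finset.sum_congr rfl fun x _ => ?_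
  rw [finrank_W_eq_sum hin W x]
  push_cast
  rw [Finset.mul_sum]

theorem sum_dv_eq (hin : ∀ x, DirectSum.IsInternal fun j : Fin k => (S j).space x)
    (c : V → α) :
    ∑ x, c x * (dv x : α)
      = ∑ i : Fin k, ∑ x, c x * (finrank ℝ ((S i).space x) : α) := by
  rw [Finset.sum_comm]
  refine Finset.sum_congr rfl fun x _ => ?_
  conv_lhs => rw [dv_eq_sum hin x]
  push_cast
  rw [Finset.mul_sum]

end Weighted

variable {σ : V → ℤ}

theorem term_trichotomy (hin : ∀ x, DirectSum.IsInternal fun j : Fin k => (S j).space x)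
    (hst : ∀ j, IsStableSub src tgt dv R σ (S j)) (W : Subrep src tgt dv R) (i : Fin k) :
    Pspace hin W i = (fun x => (⊥ : Submodule ℝ (Fin (dv x) → ℝ)))
      ∨ Pspace hin W i = (S i).space
      ∨ (∑ x, σ x * (finrank ℝ (Pspace hin W i x) : ℤ)) < 0 := by
  by_cases h1 : Pspace hin W i = fun x => (⊥ : Submodule ℝ (Fin (dv x) → ℝ))
  · exact Or.inl h1
  by_cases h2 : Pspace hin W i = (S i).space
  · exact Or.inr (Or.inl h2)
  · exact Or.inr (Or.inr ((hst i).2 (Psub hin W i) (Pspace_le hin W i) h1 h2))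

theorem term_nonpos (hin : ∀ x, DirectSum.IsInternal fun j : Fin k => (S j).space x)
    (hst : ∀ j, IsStableSub src tgt dv R σ (S j)) (W : Subrep src tgt dv R) (i : Fin k) :
    (∑ x, σ x * (finrank ℝ (Pspace hin W i x) : ℤ)) ≤ 0 := by
  rcases term_trichotomy hin hst W i with h | h | h
  · refine le_of_eq (Finset.sum_eq_zero fun y _ => ?_)
    rw [congrFun h y]
    simp
  · rw [h]; exact le_of_eq (hst i).1
  · exact le_of_lt h

theorem sum_nonpos' (hin : ∀ x, DirectSum.IsInternal fun j : Fin k => (S j).space x)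
    (hst : ∀ j, IsStableSub src tgt dv R σ (S j)) (W : Subrep src tgt dv R) :
    (∑ x, σ x * (finrank ℝ (W.space x) : ℤ)) ≤ 0 := by
  rw [sum_dim_eq hin W σ]
  exact Finset.sum_nonpos fun i _ => term_nonpos hin hst W i

theorem sigma_dv_zero (hin : ∀ x, DirectSum.IsInternal fun j : Fin k => (S j).space x)
    (hst : ∀ j, IsStableSub src tgt dv R σ (S j)) :
    (∑ x, σ x * (dv x : ℤ)) = 0 := by
  rw [sum_dv_eq hin σ]
  exact Finset.sum_eq_zero fun i _ => (hst i).1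

theorem tau_dim_zero (hin : ∀ x, DirectSum.IsInternal fun j : Fin k => (S j).space x)
    (hst : ∀ j, IsStableSub src tgt dv R σ (S j)) (W : Subrep src tgt dv R)
    (hW : (∑ x, σ x * (finrank ℝ (W.space x) : ℤ)) = 0) (τ : V → ℝ)
    (hτ1 : (∑ x, τ x * (dv x : ℝ)) = 0)
    (hτ2 : ∀ W' : Subrep src tgt dv R, (∑ x, τ x * (finrank ℝ (W'.space x) : ℝ)) ≤ 0) :
    (∑ x, τ x * (finrank ℝ (W.space x) : ℝ)) = 0 := by
  have hSi : ∀ i : Fin k, (∑ x, τ x * (finrank ℝ ((S i).space x) : ℝ)) = 0 := by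
    have hsum : ∑ i : Fin k, (∑ x, τ x * (finrank ℝ ((S i).space x) : ℝ)) = 0 := by
      rw [← sum_dv_eq hin τ]; exact hτ1
    intro i
    exact (Finset.sum_eq_zero_iff_of_nonpos (fun j _ => hτ2 (S j))).1 hsum i (Finset.mem_univ i)
  have hterm : ∀ i : Fin k, (∑ x, σ x * (finrank ℝ (Pspace hin W i x) : ℤ)) = 0 := by
    have hsum0 : ∑ i : Fin k, (∑ x, σ x * (finrank ℝ (Pspace hin W i x) : ℤ)) = 0 := by
      rw [← sum_dim_eq hin W σ]; exact hW
    intro i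
    exact (Finset.sum_eq_zero_iff_of_nonpos (fun j _ => term_nonpos hin hst W j)).1 hsum0 i
      (Finset.mem_univ i)
  rw [sum_dim_eq hin W τ]
  refine Finset.sum_eq_zero fun i _ => ?_
  rcases term_trichotomy hin hst W i with h | h | h
  · refine Finset.sum_eq_zero fun y _ => ?_
    rw [congrFun h y]
    simp
  · rw [h]; exact hSi i
  · exact absurd (hterm i) (ne_of_lt h)

end Quiver

/-- The linear functional `τ ↦ ∑ x, τ x * e x`. -/
def dotL {V : Type} [Fintype V] (e : V → ℝ) : (V → ℝ) →ₗ[ℝ] ℝ where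
  toFun τ := ∑ x, τ x * e x
  map_add' a b := by
    simp [add_mul, Finset.sum_add_distrib]
  map_smul' c a := by
    simp [Finset.mul_sum, mul_assoc]

/-- **Polystable implies interior (Lemma).**  For a finite connected acyclic quiver and an
integral weight `σ`, if a representation `R` is `σ`-polystable then `σ` lies in the
relative (intrinsic) interior of the orbit cone `Ω(R)`. -/
theorem polystable_mem_relint {V A : Type} [Fintype V] [DecidableEq V] [Fintype A]
    (src tgt : A → V) (dv : V → ℕ)
    (hconn : Connected src tgt) (hacyc : Acyclic src tgt)
    (R : Rep src tgt dv) (σ : V → ℤ)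
    (hpoly : IsPolystable src tgt dv R σ) :
    (fun x => (σ x : ℝ)) ∈ intrinsicInterior ℝ (OrbitCone src tgt dv R) := by
  classical
  obtain ⟨k, S, hin, hst⟩ := hpoly
  set σR : V → ℝ := fun x => (σ x : ℝ) with hσR
  set Ω : Set (V → ℝ) := OrbitCone src tgt dv R with hΩ
  -- σ lies in the orbit cone
  have hσΩ : σR ∈ Ω := by
    constructor
    · have h := sigma_dv_zero hin hst
      rw [hσR]
      beta_reduce
      exact_mod_cast h
    · intro W
      have h := sum_nonpos' hin hst W
      rw [hσR]
      beta_reduce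
      exact_mod_cast h
  -- the finite set of dimension vectors of subrepresentations
  set F : Set (V → ℝ) :=
    Set.range (fun W : Subrep src tgt dv R => fun x => (finrank ℝ (W.space x) : ℝ)) with hF
  have hFfin : F.Finite := by
    refine Set.Finite.subset
      (Set.Finite.pi (fun x : V => (Set.finite_Iic (dv x)).image (fun n : ℕ => (n : ℝ)))) ?_
    rintro _ ⟨W, rfl⟩
    refine Set.mem_univ_pi.2 fun x => ?_
    exact ⟨finrank ℝ (W.space x),
      by simpa using (Submodule.finrank_le (W.space x)).trans_eq (Module.finrank_fin_fun (R := ℝ)), rfl⟩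
  -- the finitely many strict constraints at σ
  set G : Set (V → ℝ) := {e ∈ F | ∑ x, σR x * e x < 0} with hG
  have hGfin : G.Finite := hFfin.subset (Set.sep_subset _ _)
  set U : Set (V → ℝ) := ⋂ e ∈ G, {τ : V → ℝ | ∑ x, τ x * e x < 0} with hU
  have hUopen : IsOpen U :=
    hGfin.isOpen_biInter fun e _ =>
      isOpen_lt (continuous_finset_sum _ fun x _ => (continuous_apply x).mul continuous_const)
        continuous_const
  have hσU : σR ∈ U := Set.mem_iInter₂.2 fun e he => he.2
  -- the linear constraints that vanish identically on Ω
  set L : Submodule ℝ (V → ℝ) :=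
    LinearMap.ker (dotL fun x => (dv x : ℝ)) ⊓
      ⨅ p : {W : Subrep src tgt dv R // (∑ x, σ x * (finrank ℝ (W.space x) : ℤ)) = 0},
        LinearMap.ker (dotL fun x => (finrank ℝ (p.1.space x) : ℝ)) with hL
  have hΩL : Ω ⊆ (L : Set (V → ℝ)) := by
    intro τ hτ
    refine Submodule.mem_inf.2 ⟨LinearMap.mem_ker.2 hτ.1, (Submodule.mem_iInf _).2 fun p => ?_⟩
    exact LinearMap.mem_ker.2 (tau_dim_zero hin hst p.1 p.2 τ hτ.1 hτ.2)
  have hspan : affineSpan ℝ Ω ≤ L.toAffineSubspace :=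
    affineSpan_le.2 (fun τ hτ => Submodule.mem_toAffineSubspace.2 (hΩL hτ))
  -- the key claim: near σ, inside the affine span, we stay in Ω
  have key : ∀ τ ∈ U, τ ∈ affineSpan ℝ Ω → τ ∈ Ω := by
    intro τ hτU hτsp
    have hτL : τ ∈ L := Submodule.mem_toAffineSubspace.1 (hspan hτsp)
    obtain ⟨hL1, hL2⟩ := Submodule.mem_inf.1 hτL
    constructor
    · exact LinearMap.mem_ker.1 hL1
    · intro W
      rcases lt_or_eq_of_le (sum_nonpos' hin hst W) with hlt | heq
      · have heG : (fun x => (finrank ℝ (W.space x) : ℝ)) ∈ G := by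
          refine ⟨⟨W, rfl⟩, ?_⟩
          rw [hσR]
          beta_reduce
          exact_mod_cast hlt
        exact le_of_lt (Set.mem_iInter₂.1 hτU _ heG)
      · have h0 := LinearMap.mem_ker.1 ((Submodule.mem_iInf _).1 hL2 ⟨W, heq⟩)
        exact le_of_eq h0
  -- conclude
  refine ⟨⟨σR, subset_affineSpan ℝ Ω hσΩ⟩, ?_, rfl⟩
  refine mem_interior.2 ⟨Subtype.val ⁻¹' U, ?_, hUopen.preimage continuous_subtype_val, hσU⟩
  exact fun p hp => key p.1 hp p.2

end QuiverRI
end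

section
/- Let A be a finite-dimensional algebra over ℝ and let M, N be left A-modules that are finite-dimensional over ℝ. If the complexifications ℂ ⊗_ℝ M and ℂ ⊗_ℝ N are isomorphic as modules over the complexified algebra ℂ ⊗_ℝ A, then M and N are isomorphic as A-modules. -/
open TensorProduct

/-- The `ℝ`-linear endomorphism of an `A`-module given by the action of `a : A`. -/
def actionMap (A : Type*) [Ring A] [Algebra ℝ A] (M : Type*) [AddCommGroup M]
    [Module ℝ M] [Module A M] [SMulCommClass ℝ A M] (a : A) : M →ₗ[ℝ] M where
  toFun m := a • m
  map_add' := smul_add a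
  map_smul' r m := (smul_comm r a m).symm

/-- **Complexification reflects isomorphism.**  Let `A` be a finite-dimensional `ℝ`-algebra
and `M`, `N` finite-dimensional `A`-modules.  If the complexifications `ℂ ⊗[ℝ] M` and
`ℂ ⊗[ℝ] N` are isomorphic as modules over `ℂ ⊗[ℝ] A` (i.e. there is a `ℂ`-linear
equivalence intertwining the base-changed action of every `a : A`), then `M ≅ N` as
`A`-modules. -/
theorem complexification_reflects_iso
    (A : Type*) [Ring A] [Algebra ℝ A] [FiniteDimensional ℝ A]
    (M : Type*) [AddCommGroup M] [Module ℝ M] [Module A M]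
    [IsScalarTower ℝ A M] [SMulCommClass ℝ A M] [FiniteDimensional ℝ M]
    (N : Type*) [AddCommGroup N] [Module ℝ N] [Module A N]
    [IsScalarTower ℝ A N] [SMulCommClass ℝ A N] [FiniteDimensional ℝ N]
    (h : ∃ e : (ℂ ⊗[ℝ] M) ≃ₗ[ℂ] (ℂ ⊗[ℝ] N), ∀ (a : A) (x : ℂ ⊗[ℝ] M),
      e ((actionMap A M a).baseChange ℂ x) = (actionMap A N a).baseChange ℂ (e x)) :
    ∃ f : M ≃ₗ[ℝ] N, ∀ (a : A) (x : M), f (a • x) = a • f x := by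
  classical
  obtain ⟨e, he⟩ := h
  -- real and imaginary part projections  ℂ ⊗ N → N
  set Fre : ℂ ⊗[ℝ] N →ₗ[ℝ] N :=
    (TensorProduct.lid ℝ N).toLinearMap ∘ₗ LinearMap.rTensor N Complex.reLm with hFre
  set Fim : ℂ ⊗[ℝ] N →ₗ[ℝ] N :=
    (TensorProduct.lid ℝ N).toLinearMap ∘ₗ LinearMap.rTensor N Complex.imLm with hFim
  have Fre_tmul : ∀ (c : ℂ) (n : N), Fre (c ⊗ₜ[ℝ] n) = c.re • n := by
    intro c n; simp [hFre]
  have Fim_tmul : ∀ (c : ℂ) (n : N), Fim (c ⊗ₜ[ℝ] n) = c.im • n := by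
    intro c n; simp [hFim]
  have hdec : ∀ z : ℂ ⊗[ℝ] N,
      (1 : ℂ) ⊗ₜ[ℝ] Fre z + Complex.I ⊗ₜ[ℝ] Fim z = z := by
    intro z
    induction z using TensorProduct.induction_on with
    | zero => simp
    | tmul c n =>
        rw [Fre_tmul, Fim_tmul, TensorProduct.tmul_smul, TensorProduct.tmul_smul,
          TensorProduct.smul_tmul', TensorProduct.smul_tmul', ← TensorProduct.add_tmul]
        congr 1
        simp [Complex.real_smul]
    | add x y hx hy =>
        rw [map_add, map_add, TensorProduct.tmul_add, TensorProduct.tmul_add]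
        conv_rhs => rw [← hx, ← hy]
        abel
  -- the ℝ-linear map m ↦ 1 ⊗ m
  set ι : M →ₗ[ℝ] ℂ ⊗[ℝ] M := TensorProduct.mk ℝ ℂ M 1 with hι
  set f : M →ₗ[ℝ] N := Fre ∘ₗ (e.toLinearMap.restrictScalars ℝ) ∘ₗ ι with hf
  set g : M →ₗ[ℝ] N := Fim ∘ₗ (e.toLinearMap.restrictScalars ℝ) ∘ₗ ι with hg
  have hfg : ∀ m : M, (1 : ℂ) ⊗ₜ[ℝ] f m + Complex.I ⊗ₜ[ℝ] g m = e ((1 : ℂ) ⊗ₜ[ℝ] m) := by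
    intro m; exact hdec _
  -- f and g intertwine the A-actions
  have hfA : ∀ (a : A) (m : M), f (a • m) = a • f m := by
    intro a m
    have h1 : e ((1 : ℂ) ⊗ₜ[ℝ] (a • m))
        = (1 : ℂ) ⊗ₜ[ℝ] (a • f m) + Complex.I ⊗ₜ[ℝ] (a • g m) := by
      have := he a ((1 : ℂ) ⊗ₜ[ℝ] m)
      rw [LinearMap.baseChange_tmul] at this
      rw [show (actionMap A M a) m = a • m from rfl] at this
      rw [this, ← hfg m, map_add, LinearMap.baseChange_tmul, LinearMap.baseChange_tmul]
      rfl
    have : f (a • m) = Fre (e ((1 : ℂ) ⊗ₜ[ℝ] (a • m))) := rfl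
    rw [this, h1, map_add, Fre_tmul, Fre_tmul]
    simp
  have hgA : ∀ (a : A) (m : M), g (a • m) = a • g m := by
    intro a m
    have h1 : e ((1 : ℂ) ⊗ₜ[ℝ] (a • m))
        = (1 : ℂ) ⊗ₜ[ℝ] (a • f m) + Complex.I ⊗ₜ[ℝ] (a • g m) := by
      have := he a ((1 : ℂ) ⊗ₜ[ℝ] m)
      rw [LinearMap.baseChange_tmul] at this
      rw [show (actionMap A M a) m = a • m from rfl] at this
      rw [this, ← hfg m, map_add, LinearMap.baseChange_tmul, LinearMap.baseChange_tmul]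
      rfl
    have : g (a • m) = Fim (e ((1 : ℂ) ⊗ₜ[ℝ] (a • m))) := rfl
    rw [this, h1, map_add, Fim_tmul, Fim_tmul]
    simp
  -- the base change of f + I g equals e
  have heE : f.baseChange ℂ + Complex.I • g.baseChange ℂ = e.toLinearMap := by
    apply LinearMap.ext
    intro x
    induction x using TensorProduct.induction_on with
    | zero => simp
    | tmul z m =>
        have hz : z ⊗ₜ[ℝ] m = z • ((1 : ℂ) ⊗ₜ[ℝ] m) := by
          rw [TensorProduct.smul_tmul']; simp
        rw [hz, map_smul, map_smul]
        congr 1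
        rw [LinearMap.add_apply, LinearMap.smul_apply, LinearMap.baseChange_tmul,
          LinearMap.baseChange_tmul, TensorProduct.smul_tmul', smul_eq_mul, mul_one]
        exact hfg m
    | add x y hx hy => rw [map_add, map_add, hx, hy]
  -- dimensions agree
  have hdim : Module.finrank ℝ N = Module.finrank ℝ M := by
    have h1 := e.finrank_eq
    rw [Module.finrank_baseChange, Module.finrank_baseChange] at h1
    exact h1.symm
  set n : ℕ := Module.finrank ℝ M with hn
  set bM : Module.Basis (Fin n) ℝ M := Module.finBasis ℝ M with hbM
  set bN : Module.Basis (Fin n) ℝ N := (Module.finBasis ℝ N).reindex (finCongr hdim) with hbN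
  set P : Matrix (Fin n) (Fin n) ℝ := LinearMap.toMatrix bM bN f with hP
  set Q : Matrix (Fin n) (Fin n) ℝ := LinearMap.toMatrix bM bN g with hQ
  -- the determinant polynomial
  set p : Polynomial ℝ :=
    (P.map Polynomial.C + (Polynomial.X : Polynomial ℝ) • Q.map Polynomial.C).det with hp
  set φ : Polynomial ℝ →+* ℂ := Polynomial.eval₂RingHom (algebraMap ℝ ℂ) Complex.I with hφ
  -- its value at I is the determinant of e, which is nonzero
  have haeval : φ p = (LinearMap.toMatrix (Algebra.TensorProduct.basis ℂ bM)
      (Algebra.TensorProduct.basis ℂ bN)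
      (f.baseChange ℂ + Complex.I • g.baseChange ℂ)).det := by
    have hmat : LinearMap.toMatrix (Algebra.TensorProduct.basis ℂ bM)
        (Algebra.TensorProduct.basis ℂ bN)
        (f.baseChange ℂ + Complex.I • g.baseChange ℂ)
        = (LinearMap.toMatrix bM bN f).map (algebraMap ℝ ℂ)
          + Complex.I • (LinearMap.toMatrix bM bN g).map (algebraMap ℝ ℂ) := by
      rw [map_add, map_smul, LinearMap.toMatrix_baseChange, LinearMap.toMatrix_baseChange]
    rw [hp, RingHom.map_det, hmat]
    congr 1
    ext i j
    simp [hφ, hP, hQ, Matrix.map_apply, Matrix.add_apply, Matrix.smul_apply, smul_eq_mul]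
    ring
  have hpne : p ≠ 0 := by
    intro h0
    have h1 : φ p ≠ 0 := by
      rw [haeval, heE]
      exact (e.isUnit_det (Algebra.TensorProduct.basis ℂ bM)
        (Algebra.TensorProduct.basis ℂ bN)).ne_zero
    rw [h0, map_zero] at h1
    exact h1 rfl
  -- find a real point where the polynomial is nonzero
  obtain ⟨t, ht⟩ : ∃ t : ℝ, p.eval t ≠ 0 := by
    by_contra hcon
    push_neg at hcon
    exact hpne (Polynomial.zero_of_eval_zero p hcon)
  -- eval t p is the determinant of f + t g
  have heval : p.eval t = (LinearMap.toMatrix bM bN (f + t • g)).det := by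
    have : p.eval t = (Polynomial.evalRingHom t) p := rfl
    have hmat : LinearMap.toMatrix bM bN (f + t • g)
        = LinearMap.toMatrix bM bN f + t • LinearMap.toMatrix bM bN g := by
      rw [map_add, map_smul]
    rw [this, hp, RingHom.map_det, hmat]
    congr 1
    ext i j
    simp [hP, hQ, Matrix.map_apply, Matrix.add_apply, Matrix.smul_apply, smul_eq_mul]
    ring
  have hunit : IsUnit (LinearMap.toMatrix bM bN (f + t • g)).det :=
    isUnit_iff_ne_zero.2 (by rw [← heval]; exact ht)
  refine ⟨LinearEquiv.ofIsUnitDet hunit, ?_⟩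
  intro a x
  show (f + t • g) (a • x) = a • ((f + t • g) x)
  simp only [LinearMap.add_apply, LinearMap.smul_apply, hfA, hgA, smul_add]
  rw [smul_comm t a]
end
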